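/- Let (X, τ) be a hereditarily normal T1 space and let M ⊆ X be a subspace with Ind M ≤ 0, i.e., every pair of disjoint relatively closed subsets of M can be separated by a relatively clopen subset of M. Then (X, τ(M)) is a hereditarily normal T1 space with Ind (X, τ(M)) ≤ 0: every pair of disjoint τ(M)-closed subsets of X can be separated by a τ(M)-clopen set. -/

import Mathlib

/-- The Bing–Hanner extension `τ(M)` of a topology `τ` on `X` determined by a subset `M ⊆ X`:
its open sets are exactly the sets of the form `U ∪ K` with `U` a `τ`-open set and
`K ⊆ X \ M`. -/
def bingHanner {X : Type*} (τ : TopologicalSpace X) (M : Set X) : TopologicalSpace X where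
  IsOpen O := ∃ U K : Set X, τ.IsOpen U ∧ K ⊆ Mᶜ ∧ O = U ∪ K
  isOpen_univ := ⟨Set.univ, ∅, τ.isOpen_univ, by simp, by simp⟩
  isOpen_inter := by
    rintro s t ⟨U₁, K₁, hU₁, hK₁, rfl⟩ ⟨U₂, K₂, hU₂, hK₂, rfl⟩
    refine ⟨U₁ ∩ U₂, ((U₁ ∪ K₁) ∩ (U₂ ∪ K₂)) \ (U₁ ∩ U₂),
      τ.isOpen_inter _ _ hU₁ hU₂, ?_, ?_⟩
    · rintro x ⟨⟨h1, h2⟩, hn⟩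
      rcases h1 with h1 | h1
      · rcases h2 with h2 | h2
        · exact absurd ⟨h1, h2⟩ hn
        · exact hK₂ h2
      · exact hK₁ h1
    · have hsub : U₁ ∩ U₂ ⊆ (U₁ ∪ K₁) ∩ (U₂ ∪ K₂) :=
        fun x hx => ⟨Or.inl hx.1, Or.inl hx.2⟩
      exact (Set.union_diff_cancel hsub).symm
  isOpen_sUnion := by
    intro S hS
    choose U K hU hK hEq using hS
    refine ⟨⋃ s, ⋃ h : s ∈ S, U s h, ⋃ s, ⋃ h : s ∈ S, K s h, ?_, ?_, ?_⟩
    · letI := τ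
      exact isOpen_iUnion fun s => isOpen_iUnion fun h => hU s h
    · exact Set.iUnion_subset fun s => Set.iUnion_subset fun h => hK s h
    · ext x
      simp only [Set.mem_sUnion, Set.mem_union, Set.mem_iUnion]
      constructor
      · rintro ⟨s, hs, hx⟩
        rw [hEq s hs] at hx
        rcases hx with hx | hx
        · exact Or.inl ⟨s, hs, hx⟩
        · exact Or.inr ⟨s, hs, hx⟩
      · rintro (⟨s, hs, hx⟩ | ⟨s, hs, hx⟩)
        · exact ⟨s, hs, by rw [hEq s hs]; exact Or.inl hx⟩
        · exact ⟨s, hs, by rw [hEq s hs]; exact Or.inr hx⟩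

/-- `covDimLE t n` : the covering dimension of `(X, t)` is at most `n`, i.e. every finite
open cover admits a finite open refinement covering `X` in which any `n + 2` pairwise
distinct members have empty intersection. -/
def covDimLE {X : Type*} (t : TopologicalSpace X) (n : ℕ) : Prop :=
  ∀ C : Set (Set X), C.Finite → (∀ U ∈ C, t.IsOpen U) → ⋃₀ C = Set.univ →
    ∃ V : Set (Set X), V.Finite ∧ (∀ U ∈ V, t.IsOpen U) ∧ ⋃₀ V = Set.univ ∧
      (∀ U ∈ V, ∃ W ∈ C, U ⊆ W) ∧
      ∀ F : Finset (Set X), ↑F ⊆ V → F.card = n + 2 → ⋂₀ (F : Set (Set X)) = ∅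

/-- `IndLE0 t` : the large inductive dimension of `(Z, t)` is at most `0`, i.e. any two
disjoint closed sets are separated by a clopen set. -/
def IndLE0 {Z : Type*} (t : TopologicalSpace Z) : Prop :=
  ∀ A B : Set Z, @IsClosed Z t A → @IsClosed Z t B → Disjoint A B →
    ∃ U : Set Z, t.IsOpen U ∧ @IsClosed Z t U ∧ A ⊆ U ∧ U ∩ B = ∅

/-- `indLE0 t` : the small inductive dimension of `(Z, t)` is at most `0`, i.e. every point
has a neighborhood basis of clopen sets. -/
def indLE0 {Z : Type*} (t : TopologicalSpace Z) : Prop :=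
  ∀ (x : Z) (O : Set Z), t.IsOpen O → x ∈ O →
    ∃ U : Set Z, t.IsOpen U ∧ @IsClosed Z t U ∧ x ∈ U ∧ U ⊆ O

/-- `L` is a partition between `A` and `B` in `(X, t)`. -/
def isPartitionBetween {X : Type*} (t : TopologicalSpace X) (A B L : Set X) : Prop :=
  ∃ U V : Set X, t.IsOpen U ∧ t.IsOpen V ∧ Disjoint U V ∧ A ⊆ U ∧ B ⊆ V ∧ L = (U ∪ V)ᶜ

/-- If `(X, τ)` is hereditarily normal `T₁` and `M ⊆ X` satisfies
`Ind M ≤ 0`, then `(X, τ(M))` is hereditarily normal `T₁` with `Ind (X, τ(M)) ≤ 0`. -/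
lemma bh_isOpen_iff {X : Type*} [τ : TopologicalSpace X] (M : Set X) {O : Set X} :
    (bingHanner τ M).IsOpen O ↔ ∃ U, IsOpen U ∧ U ⊆ O ∧ O ∩ M ⊆ U := by
  constructor
  · rintro ⟨U, K, hU, hK, rfl⟩
    refine ⟨U, hU, Set.subset_union_left, ?_⟩
    rintro x ⟨hx | hx, hxM⟩
    · exact hx
    · exact absurd hxM (hK hx)
  · rintro ⟨U, hU, hUO, hOM⟩
    exact ⟨U, O \ U, hU, fun x hx hxM => hx.2 (hOM ⟨hx.1, hxM⟩),
      (Set.union_diff_cancel hUO).symm⟩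

lemma bh_isClosed_iff {X : Type*} [τ : TopologicalSpace X] (M : Set X) {C : Set X} :
    @IsClosed X (bingHanner τ M) C ↔ closure C ∩ M ⊆ C := by
  constructor
  · intro hC
    obtain ⟨U, hU, hUC, hCM⟩ := (bh_isOpen_iff M).1 hC.isOpen_compl
    rintro x ⟨hxc, hxM⟩
    by_contra hxC
    have hxU : x ∈ U := hCM ⟨hxC, hxM⟩
    obtain ⟨y, hyU, hyC⟩ := mem_closure_iff.1 hxc U hU hxU
    exact hUC hyU hyC
  · intro h
    have hW : IsOpen (closure C)ᶜ := isOpen_compl_iff.2 isClosed_closure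
    have hop : (bingHanner τ M).IsOpen Cᶜ := by
      refine (bh_isOpen_iff M).2 ⟨(closure C)ᶜ, hW, ?_, ?_⟩
      · exact fun x hx hxC => hx (subset_closure hxC)
      · rintro x ⟨hxC, hxM⟩ hcl
        exact hxC (h ⟨hcl, hxM⟩)
    exact @IsClosed.mk X (bingHanner τ M) C hop

lemma bh_closure_subset {X : Type*} [τ : TopologicalSpace X] (M s : Set X) :
    closure s ∩ M ⊆ @closure X (bingHanner τ M) s := by
  have h := (bh_isClosed_iff M).1 (@isClosed_closure X (bingHanner τ M) s)
  intro x hx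
  exact h ⟨closure_mono (@subset_closure X (bingHanner τ M) s) hx.1, hx.2⟩

lemma bh_t1 {X : Type*} [τ : TopologicalSpace X] [T1Space X] (M : Set X) :
    @T1Space X (bingHanner τ M) :=
  @T1Space.mk X (bingHanner τ M) fun x => (bh_isClosed_iff M).2 (by
    rw [closure_singleton]; exact Set.inter_subset_left)

lemma bh_sep {X : Type*} [τ : TopologicalSpace X] [T5Space X] {M s t : Set X}
    (hst : Disjoint s t)
    (h1 : closure s ∩ M ∩ t = ∅) (h2 : s ∩ (closure t ∩ M) = ∅) :
    ∃ Us Vt : Set X, (bingHanner τ M).IsOpen Us ∧ (bingHanner τ M).IsOpen Vt ∧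
      s ⊆ Us ∧ t ⊆ Vt ∧ Disjoint Us Vt := by
  have hd1 : Disjoint (closure (s ∩ M)) (t ∩ M) := by
    rw [Set.disjoint_left]
    rintro x hx ⟨hxt, hxM⟩
    have hcs : x ∈ closure s := closure_mono Set.inter_subset_left hx
    exact Set.eq_empty_iff_forall_notMem.1 h1 x ⟨⟨hcs, hxM⟩, hxt⟩
  have hd2 : Disjoint (s ∩ M) (closure (t ∩ M)) := by
    rw [Set.disjoint_left]
    rintro x ⟨hxs, hxM⟩ hx
    have hct : x ∈ closure t := closure_mono Set.inter_subset_left hx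
    exact Set.eq_empty_iff_forall_notMem.1 h2 x ⟨hxs, hct, hxM⟩
  obtain ⟨U₁, V₁, hU₁, hV₁, hsU₁, htV₁, hUV₁⟩ :=
    separatedNhds_iff_disjoint.2 (completely_normal hd1 hd2)
  set Os := U₁ \ closure t with hOsdef
  set Ot := V₁ \ closure s with hOtdef
  have hOso : IsOpen Os := hU₁.sdiff isClosed_closure
  have hOto : IsOpen Ot := hV₁.sdiff isClosed_closure
  refine ⟨s ∪ Os, t ∪ Ot, ?_, ?_, Set.subset_union_left, Set.subset_union_left, ?_⟩
  · refine (bh_isOpen_iff M).2 ⟨Os, hOso, Set.subset_union_right, ?_⟩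
    rintro x ⟨hx | hx, hxM⟩
    · refine ⟨hsU₁ ⟨hx, hxM⟩, fun hct => ?_⟩
      exact Set.eq_empty_iff_forall_notMem.1 h2 x ⟨hx, hct, hxM⟩
    · exact hx
  · refine (bh_isOpen_iff M).2 ⟨Ot, hOto, Set.subset_union_right, ?_⟩
    rintro x ⟨hx | hx, hxM⟩
    · refine ⟨htV₁ ⟨hx, hxM⟩, fun hcs => ?_⟩
      exact Set.eq_empty_iff_forall_notMem.1 h1 x ⟨⟨hcs, hxM⟩, hx⟩
    · exact hx
  · rw [Set.disjoint_left]
    rintro x (hx | hx) (hy | hy)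
    · exact Set.disjoint_left.1 hst hx hy
    · exact hy.2 (subset_closure hx)
    · exact hx.2 (subset_closure hy)
    · exact Set.disjoint_left.1 hUV₁ hx.1 hy.1

theorem bingHanner_T5_and_IndZero' {X : Type*} (τ : TopologicalSpace X)
    (hT5 : @T5Space X τ) (M : Set X)
    (hM : ∀ A B : Set M, @IsClosed M (TopologicalSpace.induced (Subtype.val : M → X) τ) A →
      @IsClosed M (TopologicalSpace.induced (Subtype.val : M → X) τ) B → Disjoint A B →
      ∃ U : Set M, (TopologicalSpace.induced (Subtype.val : M → X) τ).IsOpen U ∧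
        @IsClosed M (TopologicalSpace.induced (Subtype.val : M → X) τ) U ∧ A ⊆ U ∧ U ∩ B = ∅) :
    @T5Space X (bingHanner τ M) ∧
    (∀ A B : Set X, @IsClosed X (bingHanner τ M) A → @IsClosed X (bingHanner τ M) B →
      Disjoint A B → ∃ U : Set X, (bingHanner τ M).IsOpen U ∧ @IsClosed X (bingHanner τ M) U ∧
        A ⊆ U ∧ U ∩ B = ∅) := by
  letI := τ
  haveI := hT5
  constructor
  · -- T5
    haveI ht1 : @T1Space X (bingHanner τ M) := bh_t1 M
    refine @T5Space.mk X (bingHanner τ M) ht1 (@CompletelyNormalSpace.mk X (bingHanner τ M) ?_)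
    intro s t hd1 hd2
    have hst : Disjoint s t := hd1.mono_left (@subset_closure X (bingHanner τ M) s)
    have h1 : closure s ∩ M ∩ t = ∅ := by
      rw [Set.eq_empty_iff_forall_notMem]
      rintro x ⟨hx, hxt⟩
      exact Set.disjoint_left.1 hd1 (bh_closure_subset M s hx) hxt
    have h2 : s ∩ (closure t ∩ M) = ∅ := by
      rw [Set.eq_empty_iff_forall_notMem]
      rintro x ⟨hxs, hx⟩
      exact Set.disjoint_left.1 hd2 hxs (bh_closure_subset M t hx)
    obtain ⟨Us, Vt, hUs, hVt, hsU, htV, hUV⟩ := bh_sep hst h1 h2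
    exact (@separatedNhds_iff_disjoint X (bingHanner τ M) s t).1 ⟨Us, Vt, hUs, hVt, hsU, htV, hUV⟩
  · -- Ind ≤ 0
    intro A B hA hB hAB
    have hAcl : closure A ∩ M ⊆ A := (bh_isClosed_iff M).1 hA
    have hBcl : closure B ∩ M ⊆ B := (bh_isClosed_iff M).1 hB
    set A' : Set M := Subtype.val ⁻¹' A with hA'def
    set B' : Set M := Subtype.val ⁻¹' B with hB'def
    have hA'c : @IsClosed M (TopologicalSpace.induced (Subtype.val : M → X) τ) A' := by
      have heq : A' = (Subtype.val : M → X) ⁻¹' (closure A) := by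
        ext x
        exact ⟨fun h => subset_closure h, fun h => hAcl ⟨h, x.2⟩⟩
      rw [heq]
      exact IsClosed.preimage continuous_subtype_val isClosed_closure
    have hB'c : @IsClosed M (TopologicalSpace.induced (Subtype.val : M → X) τ) B' := by
      have heq : B' = (Subtype.val : M → X) ⁻¹' (closure B) := by
        ext x
        exact ⟨fun h => subset_closure h, fun h => hBcl ⟨h, x.2⟩⟩
      rw [heq]
      exact IsClosed.preimage continuous_subtype_val isClosed_closure
    obtain ⟨E, hEo, hEc, hAE, hEB⟩ := hM A' B' hA'c hB'c (hAB.preimage _)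
    obtain ⟨G, hG, hGE⟩ := hEo
    obtain ⟨Gc, hGc, hGcE⟩ := hEc.isOpen_compl
    set E' : Set X := M ∩ G with hE'def
    have hmemE' : ∀ (x : X) (hx : x ∈ M), x ∈ E' ↔ (⟨x, hx⟩ : M) ∈ E := by
      intro x hx
      constructor
      · rintro ⟨-, hxG⟩
        rw [← hGE]; exact hxG
      · intro hE
        refine ⟨hx, ?_⟩
        rw [← hGE] at hE; exact hE
    have hE'M : E' ⊆ M := Set.inter_subset_left
    have hE'F : E' ⊆ Gcᶜ := by
      rintro x hxE' hxGc
      have hE : (⟨x, hxE'.1⟩ : M) ∈ E := (hmemE' x hxE'.1).1 hxE'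
      have : (⟨x, hxE'.1⟩ : M) ∈ (Eᶜ : Set M) := by rw [← hGcE]; exact hxGc
      exact this hE
    have hf1 : closure E' ∩ M ⊆ E' := by
      rintro x ⟨hxc, hxM⟩
      have hxF : x ∈ Gcᶜ := closure_minimal hE'F (isClosed_compl_iff.2 hGc) hxc
      refine (hmemE' x hxM).2 ?_
      by_contra hne
      have : (⟨x, hxM⟩ : M) ∈ (Eᶜ : Set M) := hne
      rw [← hGcE] at this
      exact hxF this
    have hcompl : M \ E' ⊆ Gᶜ := fun x hx hxG => hx.2 ⟨hx.1, hxG⟩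
    have hf2 : closure (M \ E') ∩ M ⊆ M \ E' := by
      rintro x ⟨hxc, hxM⟩
      have hxGc : x ∈ Gᶜ := closure_minimal hcompl (isClosed_compl_iff.2 hG) hxc
      exact ⟨hxM, fun hxE' => hxGc hxE'.2⟩
    have hd1 : Disjoint (closure E') (M \ E') := by
      rw [Set.disjoint_left]
      intro x hx hx2
      exact hx2.2 (hf1 ⟨hx, hx2.1⟩)
    have hd2 : Disjoint E' (closure (M \ E')) := by
      rw [Set.disjoint_left]
      intro x hx hx2
      exact (hf2 ⟨hx2, hE'M hx⟩).2 hx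
    obtain ⟨U₀, V₀, hU₀, hV₀, hEU₀, hMV₀, hUV₀⟩ :=
      separatedNhds_iff_disjoint.2 (completely_normal hd1 hd2)
    have hAM : A ∩ M ⊆ E' := by
      rintro x ⟨hxA, hxM⟩
      exact (hmemE' x hxM).2 (hAE (show (⟨x, hxM⟩ : M) ∈ A' from hxA))
    have hE'B : ∀ x, x ∈ E' → x ∉ B := by
      intro x hxE' hxB
      have hxM := hxE'.1
      have hE : (⟨x, hxM⟩ : M) ∈ E := (hmemE' x hxM).1 hxE'
      exact Set.eq_empty_iff_forall_notMem.1 hEB ⟨x, hxM⟩ ⟨hE, hxB⟩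
    set U : Set X := (U₀ ∪ (A ∪ E')) \ (B ∪ (M \ E')) with hUdef
    have hUopen : (bingHanner τ M).IsOpen U := by
      refine (bh_isOpen_iff M).2 ⟨U₀ \ closure B, hU₀.sdiff isClosed_closure, ?_, ?_⟩
      · rintro x ⟨hxU₀, hxcB⟩
        refine ⟨Or.inl hxU₀, ?_⟩
        rintro (hxB | hxME')
        · exact hxcB (subset_closure hxB)
        · exact Set.disjoint_left.1 hUV₀ hxU₀ (hMV₀ hxME')
      · rintro x ⟨⟨hx1, hx2⟩, hxM⟩
        have hxE' : x ∈ E' := by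
          by_contra hne
          exact hx2 (Or.inr ⟨hxM, hne⟩)
        refine ⟨hEU₀ hxE', fun hxcB => ?_⟩
        have hxB : x ∈ B := hBcl ⟨hxcB, hxM⟩
        exact hx2 (Or.inl hxB)
    have hUclosed : @IsClosed X (bingHanner τ M) U := by
      have hUc : (bingHanner τ M).IsOpen Uᶜ := by
        refine (bh_isOpen_iff M).2 ⟨V₀ \ closure A, hV₀.sdiff isClosed_closure, ?_, ?_⟩
        · rintro x ⟨hxV₀, hxcA⟩ hxU
          rcases hxU.1 with hxU₀ | (hxA | hxE')
          · exact Set.disjoint_left.1 hUV₀ hxU₀ hxV₀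
          · exact hxcA (subset_closure hxA)
          · exact Set.disjoint_left.1 hUV₀ (hEU₀ hxE') hxV₀
        · rintro x ⟨hxU, hxM⟩
          have hxE' : x ∉ E' := by
            intro hxE'
            exact hxU ⟨Or.inr (Or.inr hxE'), by
              rintro (hxB | hxME')
              · exact hE'B x hxE' hxB
              · exact hxME'.2 hxE'⟩
          refine ⟨hMV₀ ⟨hxM, hxE'⟩, fun hxcA => ?_⟩
          have hxA : x ∈ A := hAcl ⟨hxcA, hxM⟩
          refine hxU ⟨Or.inr (Or.inl hxA), ?_⟩
          rintro (hxB | hxME')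
          · exact Set.disjoint_left.1 hAB hxA hxB
          · exact hxME'.2 (hAM ⟨hxA, hxM⟩)
      exact @IsClosed.mk X (bingHanner τ M) U hUc
    refine ⟨U, hUopen, hUclosed, ?_, ?_⟩
    · intro x hxA
      refine ⟨Or.inr (Or.inl hxA), ?_⟩
      rintro (hxB | hxME')
      · exact Set.disjoint_left.1 hAB hxA hxB
      · exact hxME'.2 (hAM ⟨hxA, hxME'.1⟩)
    · rw [Set.eq_empty_iff_forall_notMem]
      rintro x ⟨hxU, hxB⟩
      exact hxU.2 (Or.inl hxB)

theorem bingHanner_T5_and_IndZero {X : Type*} (τ : TopologicalSpace X)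
    (hT5 : @T5Space X τ) (M : Set X)
    (hM : IndLE0 (TopologicalSpace.induced (Subtype.val : M → X) τ)) :
    @T5Space X (bingHanner τ M) ∧ IndLE0 (bingHanner τ M) :=
  bingHanner_T5_and_IndZero' τ hT5 M hM
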